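/- Let a = (a1, a2, a3) be a unit vector in R^3 with a1 ≥ a2 ≥ a3 > 0 and let t satisfy a1 + a2 - a3 ≤ t ≤ a1 + a2 + a3. Then the 3-dimensional Lebesgue measure of the slab {x ∈ [-1/2,1/2]^3 : |⟨a,x⟩| ≤ t/2} equals 1 - (a1 + a2 + a3 - t)^3/(24*a1*a2*a3). -/

import Mathlib

open MeasureTheory Set

private lemma poly_int (c0 c1 c2 h : ℝ) :
    ∫ x in (0:ℝ)..h, (c0 + c1 * x + c2 * x ^ 2) =
      c0 * h + c1 * (h ^ 2 / 2) + c2 * (h ^ 3 / 3) := by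
  have h1 : IntervalIntegrable (fun x : ℝ => c0 + c1 * x) volume 0 h :=
    (Continuous.intervalIntegrable (by continuity) _ _)
  have h2 : IntervalIntegrable (fun x : ℝ => c2 * x ^ 2) volume 0 h :=
    (Continuous.intervalIntegrable (by continuity) _ _)
  have h3 : IntervalIntegrable (fun x : ℝ => (c0 : ℝ)) volume 0 h :=
    intervalIntegrable_const
  have h4 : IntervalIntegrable (fun x : ℝ => c1 * x) volume 0 h :=
    (Continuous.intervalIntegrable (by continuity) _ _)
  rw [intervalIntegral.integral_add h1 h2, intervalIntegral.integral_add h3 h4,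
    intervalIntegral.integral_const, intervalIntegral.integral_const_mul,
    intervalIntegral.integral_const_mul, integral_id, integral_pow]
  simp [smul_eq_mul]
  ring

private lemma vol_tri {b c e : ℝ} (hb : 0 < b) (hc : 0 < c) (he : 0 ≤ e) :
    volume {p : ℝ × ℝ | 0 ≤ p.1 ∧ 0 ≤ p.2 ∧ b * p.1 + c * p.2 < e} =
      ENNReal.ofReal (e ^ 2 / (2 * (b * c))) := by
  have hm : MeasurableSet {p : ℝ × ℝ | 0 ≤ p.1 ∧ 0 ≤ p.2 ∧ b * p.1 + c * p.2 < e} := by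
    have hlin : Measurable fun p : ℝ × ℝ => b * p.1 + c * p.2 := by fun_prop
    exact (measurableSet_le measurable_const measurable_fst).inter
      ((measurableSet_le measurable_const measurable_snd).inter
        (measurableSet_lt hlin measurable_const))
  rw [Measure.volume_eq_prod, Measure.prod_apply hm]
  have key : ∀ x : ℝ,
      volume (Prod.mk x ⁻¹' {p : ℝ × ℝ | 0 ≤ p.1 ∧ 0 ≤ p.2 ∧ b * p.1 + c * p.2 < e}) =
      indicator (Icc 0 (e / b)) (fun x => ENNReal.ofReal ((e - b * x) / c)) x := by
    intro x
    by_cases hx : x ∈ Icc (0:ℝ) (e / b)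
    · rw [indicator_of_mem hx]
      have hset : Prod.mk x ⁻¹' {p : ℝ × ℝ | 0 ≤ p.1 ∧ 0 ≤ p.2 ∧ b * p.1 + c * p.2 < e}
          = Ico 0 ((e - b * x) / c) := by
        ext y
        simp only [mem_preimage, mem_setOf_eq, mem_Ico]
        constructor
        · rintro ⟨_, hy, hlt⟩
          exact ⟨hy, (lt_div_iff₀' hc).2 (by linarith)⟩
        · rintro ⟨hy, hlt⟩
          have := (lt_div_iff₀' hc).1 hlt
          exact ⟨hx.1, hy, by linarith⟩
      rw [hset, Real.volume_Ico, sub_zero]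
    · rw [indicator_of_notMem hx]
      have hset : Prod.mk x ⁻¹' {p : ℝ × ℝ | 0 ≤ p.1 ∧ 0 ≤ p.2 ∧ b * p.1 + c * p.2 < e}
          = (∅ : Set ℝ) := by
        ext y
        simp only [mem_preimage, mem_setOf_eq, mem_empty_iff_false, iff_false]
        rintro ⟨hx0, hy0, hlt⟩
        apply hx
        refine ⟨hx0, (le_div_iff₀ hb).2 ?_⟩
        nlinarith [mul_nonneg hc.le hy0]
      rw [hset]
      simp
  rw [lintegral_congr key, lintegral_indicator measurableSet_Icc _,
    ← ofReal_integral_eq_lintegral_ofReal]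
  · congr 1
    have hh : (0:ℝ) ≤ e / b := div_nonneg he hb.le
    rw [MeasureTheory.integral_Icc_eq_integral_Ioc, ← intervalIntegral.integral_of_le hh]
    have hrw : ∀ x : ℝ, (e - b * x) / c = e / c + (-(b / c)) * x + 0 * x ^ 2 := by
      intro x; ring
    simp_rw [hrw]
    rw [poly_int]
    field_simp
    ring
  · apply Continuous.integrableOn_Icc
    continuity
  · refine ae_restrict_of_forall_mem measurableSet_Icc fun x hx => ?_
    have := (le_div_iff₀ hb).1 hx.2
    have hbx : b * x ≤ e := by linarith [mul_comm x b]
    exact div_nonneg (by linarith) hc.le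

private lemma vol_simplex {a1 a2 a3 d : ℝ} (h1 : 0 < a1) (h2 : 0 < a2) (h3 : 0 < a3)
    (hd : 0 ≤ d) :
    volume {p : ℝ × ℝ × ℝ | 0 ≤ p.1 ∧ 0 ≤ p.2.1 ∧ 0 ≤ p.2.2 ∧
        a1 * p.1 + a2 * p.2.1 + a3 * p.2.2 < d}
      = ENNReal.ofReal (d ^ 3 / (6 * (a1 * a2 * a3))) := by
  have hm : MeasurableSet {p : ℝ × ℝ × ℝ | 0 ≤ p.1 ∧ 0 ≤ p.2.1 ∧ 0 ≤ p.2.2 ∧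
      a1 * p.1 + a2 * p.2.1 + a3 * p.2.2 < d} := by
    have hlin : Measurable fun p : ℝ × ℝ × ℝ => a1 * p.1 + a2 * p.2.1 + a3 * p.2.2 := by
      fun_prop
    exact (measurableSet_le measurable_const measurable_fst).inter
      ((measurableSet_le measurable_const (measurable_fst.comp measurable_snd)).inter
        ((measurableSet_le measurable_const (measurable_snd.comp measurable_snd)).inter
          (measurableSet_lt hlin measurable_const)))
  rw [Measure.volume_eq_prod, Measure.prod_apply hm]
  have key : ∀ x : ℝ,
      volume (Prod.mk x ⁻¹' {p : ℝ × ℝ × ℝ | 0 ≤ p.1 ∧ 0 ≤ p.2.1 ∧ 0 ≤ p.2.2 ∧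
        a1 * p.1 + a2 * p.2.1 + a3 * p.2.2 < d}) =
      indicator (Icc 0 (d / a1))
        (fun x => ENNReal.ofReal ((d - a1 * x) ^ 2 / (2 * (a2 * a3)))) x := by
    intro x
    by_cases hx : x ∈ Icc (0:ℝ) (d / a1)
    · rw [indicator_of_mem hx]
      have he : (0:ℝ) ≤ d - a1 * x := by
        have := (le_div_iff₀ h1).1 hx.2
        linarith [mul_comm x a1]
      have hset : Prod.mk x ⁻¹' {p : ℝ × ℝ × ℝ | 0 ≤ p.1 ∧ 0 ≤ p.2.1 ∧ 0 ≤ p.2.2 ∧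
          a1 * p.1 + a2 * p.2.1 + a3 * p.2.2 < d}
          = {q : ℝ × ℝ | 0 ≤ q.1 ∧ 0 ≤ q.2 ∧ a2 * q.1 + a3 * q.2 < d - a1 * x} := by
        ext q
        simp only [mem_preimage, mem_setOf_eq]
        constructor
        · rintro ⟨_, hq1, hq2, hlt⟩
          exact ⟨hq1, hq2, by linarith⟩
        · rintro ⟨hq1, hq2, hlt⟩
          exact ⟨hx.1, hq1, hq2, by linarith⟩
      rw [hset, vol_tri h2 h3 he]
    · rw [indicator_of_notMem hx]
      have hset : Prod.mk x ⁻¹' {p : ℝ × ℝ × ℝ | 0 ≤ p.1 ∧ 0 ≤ p.2.1 ∧ 0 ≤ p.2.2 ∧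
          a1 * p.1 + a2 * p.2.1 + a3 * p.2.2 < d} = (∅ : Set (ℝ × ℝ)) := by
        ext q
        simp only [mem_preimage, mem_setOf_eq, mem_empty_iff_false, iff_false]
        rintro ⟨hx0, hq1, hq2, hlt⟩
        apply hx
        refine ⟨hx0, (le_div_iff₀ h1).2 ?_⟩
        nlinarith [mul_nonneg h2.le hq1, mul_nonneg h3.le hq2]
      rw [hset]
      simp
  rw [lintegral_congr key, lintegral_indicator measurableSet_Icc _,
    ← ofReal_integral_eq_lintegral_ofReal]
  · congr 1
    have hh : (0:ℝ) ≤ d / a1 := div_nonneg hd h1.le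
    rw [MeasureTheory.integral_Icc_eq_integral_Ioc, ← intervalIntegral.integral_of_le hh]
    have hrw : ∀ x : ℝ, (d - a1 * x) ^ 2 / (2 * (a2 * a3)) =
        d ^ 2 / (2 * (a2 * a3)) + (-(d * a1 / (a2 * a3))) * x
          + (a1 ^ 2 / (2 * (a2 * a3))) * x ^ 2 := by
      intro x; field_simp; ring
    simp_rw [hrw]
    rw [poly_int]
    field_simp
    ring
  · apply Continuous.integrableOn_Icc
    continuity
  · refine ae_restrict_of_forall_mem measurableSet_Icc fun x hx => ?_
    positivity

set_option maxHeartbeats 1000000 in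
theorem slab_cube3_g5
    (a1 a2 a3 t : ℝ) (hunit : a1 ^ 2 + a2 ^ 2 + a3 ^ 2 = 1)
    (h12 : a1 ≥ a2) (h23 : a2 ≥ a3) (h3 : a3 > 0)
    (ht0 : a1 + a2 - a3 ≤ t) (ht1 : t ≤ a1 + a2 + a3) :
    volume {x : EuclideanSpace ℝ (Fin 3) |
        (∀ i, |x i| ≤ 1 / 2) ∧ |a1 * x 0 + a2 * x 1 + a3 * x 2| ≤ t / 2}
      = ENNReal.ofReal (1 - (a1 + a2 + a3 - t) ^ 3 / (24 * a1 * a2 * a3)) := by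
  have h2 : 0 < a2 := lt_of_lt_of_le h3 h23
  have h1 : 0 < a1 := lt_of_lt_of_le h2 h12
  have ht : 0 < t := by linarith
  set d : ℝ := (a1 + a2 + a3 - t) / 2 with hd
  have hd0 : 0 ≤ d := by rw [hd]; linarith
  have hd3 : d ≤ a3 := by rw [hd]; linarith
  set L : ℝ × ℝ × ℝ → ℝ := fun p => a1 * p.1 + a2 * p.2.1 + a3 * p.2.2 with hLdef
  have hLm : Measurable L := by rw [hLdef]; fun_prop
  set T : Set (ℝ × ℝ × ℝ) :=
    {p | 0 ≤ p.1 ∧ 0 ≤ p.2.1 ∧ 0 ≤ p.2.2 ∧ a1 * p.1 + a2 * p.2.1 + a3 * p.2.2 < d} with hTdef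
  have hTm : MeasurableSet T := by
    rw [hTdef]
    have hlin : Measurable fun p : ℝ × ℝ × ℝ => a1 * p.1 + a2 * p.2.1 + a3 * p.2.2 := by
      fun_prop
    exact (measurableSet_le measurable_const measurable_fst).inter
      ((measurableSet_le measurable_const (measurable_fst.comp measurable_snd)).inter
        ((measurableSet_le measurable_const (measurable_snd.comp measurable_snd)).inter
          (measurableSet_lt hlin measurable_const)))
  have hTvol : volume T = ENNReal.ofReal (d ^ 3 / (6 * (a1 * a2 * a3))) :=
    vol_simplex h1 h2 h3 hd0
  set C : Set (ℝ × ℝ × ℝ) :=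
    Icc (-(1:ℝ)/2) (1/2) ×ˢ (Icc (-(1:ℝ)/2) (1/2) ×ˢ Icc (-(1:ℝ)/2) (1/2)) with hCdef
  have hCm : MeasurableSet C := measurableSet_Icc.prod (measurableSet_Icc.prod measurableSet_Icc)
  have hCvol : volume C = 1 := by
    rw [hCdef]
    rw [Measure.volume_eq_prod, Measure.prod_prod, Measure.volume_eq_prod, Measure.prod_prod,
      Real.volume_Icc]
    norm_num
  set Ap : Set (ℝ × ℝ × ℝ) := C ∩ {p | t / 2 < L p} with hApdef
  set An : Set (ℝ × ℝ × ℝ) := C ∩ {p | L p < -(t / 2)} with hAndef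
  have hApm : MeasurableSet Ap := hCm.inter (measurableSet_lt measurable_const hLm)
  have hAnm : MeasurableSet An := hCm.inter (measurableSet_lt hLm measurable_const)
  -- A⁺ as preimage of T
  have hφmp : MeasurePreserving
      (fun p : ℝ × ℝ × ℝ => ((1:ℝ)/2 - p.1, ((1:ℝ)/2 - p.2.1, (1:ℝ)/2 - p.2.2)))
      volume volume := by
    have m1 : MeasurePreserving (fun x : ℝ => (1:ℝ)/2 - x) volume volume :=
      Measure.measurePreserving_sub_left volume (1/2)
    exact m1.prod (m1.prod m1)
  have hApT : (fun p : ℝ × ℝ × ℝ => ((1:ℝ)/2 - p.1, ((1:ℝ)/2 - p.2.1, (1:ℝ)/2 - p.2.2))) ⁻¹' T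
      = Ap := by
    rw [hTdef, hApdef, hCdef, hLdef]
    ext p
    obtain ⟨p1, p2, p3⟩ := p
    simp only [mem_preimage, mem_setOf_eq, mem_inter_iff, mem_prod, mem_Icc]
    constructor
    · rintro ⟨hu1, hu2, hu3, hsum⟩
      have k1 : a2 * (1/2 - p2) ≥ 0 := mul_nonneg h2.le hu2
      have k2 : a3 * (1/2 - p3) ≥ 0 := mul_nonneg h3.le hu3
      have k3 : a1 * (1/2 - p1) ≥ 0 := mul_nonneg h1.le hu1
      have hu1' : 1/2 - p1 < 1 :=
        lt_of_mul_lt_mul_left (a := a1) (by linarith : a1 * (1/2 - p1) < a1 * 1) h1.le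
      have hu2' : 1/2 - p2 < 1 :=
        lt_of_mul_lt_mul_left (a := a2) (by linarith : a2 * (1/2 - p2) < a2 * 1) h2.le
      have hu3' : 1/2 - p3 < 1 :=
        lt_of_mul_lt_mul_left (a := a3) (by linarith : a3 * (1/2 - p3) < a3 * 1) h3.le
      refine ⟨⟨⟨by linarith, by linarith⟩, ⟨by linarith, by linarith⟩,
        ⟨by linarith, by linarith⟩⟩, by rw [hd] at hsum; linarith⟩
    · rintro ⟨⟨⟨hb1, hb1'⟩, ⟨hb2, hb2'⟩, ⟨hb3, hb3'⟩⟩, hLp⟩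
      exact ⟨by linarith, by linarith, by linarith, by rw [hd]; linarith⟩
  have hApvol : volume Ap = ENNReal.ofReal (d ^ 3 / (6 * (a1 * a2 * a3))) := by
    rw [← hApT, hφmp.measure_preimage hTm.nullMeasurableSet, hTvol]
  -- A⁻ as preimage of T
  have hψmp : MeasurePreserving
      (fun p : ℝ × ℝ × ℝ => (p.1 + (1:ℝ)/2, (p.2.1 + (1:ℝ)/2, p.2.2 + (1:ℝ)/2)))
      volume volume := by
    have m1 : MeasurePreserving (fun x : ℝ => x + (1:ℝ)/2) volume volume :=
      measurePreserving_add_right volume (1/2)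
    exact m1.prod (m1.prod m1)
  have hAnT : (fun p : ℝ × ℝ × ℝ => (p.1 + (1:ℝ)/2, (p.2.1 + (1:ℝ)/2, p.2.2 + (1:ℝ)/2))) ⁻¹' T
      = An := by
    rw [hTdef, hAndef, hCdef, hLdef]
    ext p
    obtain ⟨p1, p2, p3⟩ := p
    simp only [mem_preimage, mem_setOf_eq, mem_inter_iff, mem_prod, mem_Icc]
    constructor
    · rintro ⟨hu1, hu2, hu3, hsum⟩
      have k1 : a2 * (p2 + 1/2) ≥ 0 := mul_nonneg h2.le hu2
      have k2 : a3 * (p3 + 1/2) ≥ 0 := mul_nonneg h3.le hu3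
      have k3 : a1 * (p1 + 1/2) ≥ 0 := mul_nonneg h1.le hu1
      have hu1' : p1 + 1/2 < 1 :=
        lt_of_mul_lt_mul_left (a := a1) (by linarith : a1 * (p1 + 1/2) < a1 * 1) h1.le
      have hu2' : p2 + 1/2 < 1 :=
        lt_of_mul_lt_mul_left (a := a2) (by linarith : a2 * (p2 + 1/2) < a2 * 1) h2.le
      have hu3' : p3 + 1/2 < 1 :=
        lt_of_mul_lt_mul_left (a := a3) (by linarith : a3 * (p3 + 1/2) < a3 * 1) h3.le
      refine ⟨⟨⟨by linarith, by linarith⟩, ⟨by linarith, by linarith⟩,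
        ⟨by linarith, by linarith⟩⟩, by rw [hd] at hsum; linarith⟩
    · rintro ⟨⟨⟨hb1, hb1'⟩, ⟨hb2, hb2'⟩, ⟨hb3, hb3'⟩⟩, hLp⟩
      exact ⟨by linarith, by linarith, by linarith, by rw [hd]; linarith⟩
  have hAnvol : volume An = ENNReal.ofReal (d ^ 3 / (6 * (a1 * a2 * a3))) := by
    rw [← hAnT, hψmp.measure_preimage hTm.nullMeasurableSet, hTvol]
  -- S0 and its volume
  set S0 : Set (ℝ × ℝ × ℝ) :=
    {p | |p.1| ≤ 1/2 ∧ |p.2.1| ≤ 1/2 ∧ |p.2.2| ≤ 1/2 ∧ |L p| ≤ t/2} with hS0def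
  have hS0m : MeasurableSet S0 := by
    rw [hS0def]
    exact (measurableSet_le measurable_fst.abs measurable_const).inter
      ((measurableSet_le (measurable_fst.comp measurable_snd).abs measurable_const).inter
        ((measurableSet_le (measurable_snd.comp measurable_snd).abs measurable_const).inter
          (measurableSet_le hLm.abs measurable_const)))
  have hS0eq : S0 = C \ (Ap ∪ An) := by
    rw [hS0def, hApdef, hAndef, hCdef, hLdef]
    ext p
    obtain ⟨p1, p2, p3⟩ := p
    simp only [mem_setOf_eq, mem_diff, mem_union, mem_inter_iff, mem_prod, mem_Icc, abs_le]
    constructor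
    · rintro ⟨⟨b1, b1'⟩, ⟨b2, b2'⟩, ⟨b3, b3'⟩, bl, bl'⟩
      refine ⟨⟨⟨by linarith, by linarith⟩, ⟨by linarith, by linarith⟩,
        ⟨by linarith, by linarith⟩⟩, ?_⟩
      rintro (⟨_, h⟩ | ⟨_, h⟩) <;> linarith
    · rintro ⟨⟨⟨c1, c1'⟩, ⟨c2, c2'⟩, ⟨c3, c3'⟩⟩, hn⟩
      have hC : ((-(1:ℝ)/2 ≤ p1 ∧ p1 ≤ 1/2) ∧ (-(1:ℝ)/2 ≤ p2 ∧ p2 ≤ 1/2) ∧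
          (-(1:ℝ)/2 ≤ p3 ∧ p3 ≤ 1/2)) := ⟨⟨c1, c1'⟩, ⟨c2, c2'⟩, ⟨c3, c3'⟩⟩
      have hnp : ¬ (t/2 < a1 * p1 + a2 * p2 + a3 * p3) := fun h => hn (Or.inl ⟨hC, h⟩)
      have hnn : ¬ (a1 * p1 + a2 * p2 + a3 * p3 < -(t/2)) := fun h => hn (Or.inr ⟨hC, h⟩)
      push_neg at hnp hnn
      exact ⟨⟨by linarith, by linarith⟩, ⟨by linarith, by linarith⟩,
        ⟨by linarith, by linarith⟩, by linarith, by linarith⟩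
  have hdisj : Disjoint Ap An := by
    rw [hApdef, hAndef]
    rw [Set.disjoint_left]
    rintro p ⟨_, hp⟩ ⟨_, hq⟩
    simp only [mem_setOf_eq] at hp hq
    linarith
  have hsub : Ap ∪ An ⊆ C := union_subset inter_subset_left inter_subset_left
  have hUvol : volume (Ap ∪ An)
      = ENNReal.ofReal (d ^ 3 / (6 * (a1 * a2 * a3)))
        + ENNReal.ofReal (d ^ 3 / (6 * (a1 * a2 * a3))) := by
    rw [measure_union hdisj hAnm, hApvol, hAnvol]
  have hUfin : volume (Ap ∪ An) ≠ ⊤ := by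
    rw [hUvol]; exact ENNReal.add_ne_top.2 ⟨ENNReal.ofReal_ne_top, ENNReal.ofReal_ne_top⟩
  have hS0vol : volume S0 = ENNReal.ofReal (1 - (a1 + a2 + a3 - t) ^ 3 / (24 * a1 * a2 * a3)) := by
    rw [hS0eq, measure_diff hsub (hApm.union hAnm).nullMeasurableSet hUfin, hCvol, hUvol]
    have hq : (0:ℝ) ≤ d ^ 3 / (6 * (a1 * a2 * a3)) := by positivity
    rw [← ENNReal.ofReal_add hq hq, ← ENNReal.ofReal_one, ← ENNReal.ofReal_sub _ (by linarith)]
    congr 1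
    rw [hd]
    field_simp
    ring
  -- transfer from EuclideanSpace
  have hG : MeasurePreserving
      (fun x : EuclideanSpace ℝ (Fin 3) => ((x 0, (x 1, x 2)) : ℝ × ℝ × ℝ)) volume volume := by
    have e1 := EuclideanSpace.volume_preserving_symm_measurableEquiv_toLp (Fin 3)
    have e2 := volume_preserving_piFinSuccAbove (fun _ : Fin 3 => ℝ) 0
    have e3 := (MeasurePreserving.id (volume : Measure ℝ)).prod
      (volume_preserving_finTwoArrow ℝ)
    have hcomp := (e3.comp e2).comp e1
    have hfun : ((Prod.map id (⇑(MeasurableEquiv.finTwoArrow : (Fin 2 → ℝ) ≃ᵐ ℝ × ℝ))) ∘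
        (⇑(MeasurableEquiv.piFinSuccAbove (fun _ : Fin 3 => ℝ) 0))) ∘
        (⇑(MeasurableEquiv.toLp 2 (Fin 3 → ℝ)).symm)
        = fun x : EuclideanSpace ℝ (Fin 3) => ((x 0, (x 1, x 2)) : ℝ × ℝ × ℝ) := by
      funext x
      simp [MeasurableEquiv.piFinSuccAbove_apply, MeasurableEquiv.finTwoArrow_apply,
        Function.comp, Fin.succAbove, Fin.tail]
    rw [hfun] at hcomp
    exact hcomp
  have hSeq : {x : EuclideanSpace ℝ (Fin 3) |
      (∀ i, |x i| ≤ 1 / 2) ∧ |a1 * x 0 + a2 * x 1 + a3 * x 2| ≤ t / 2}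
      = (fun x : EuclideanSpace ℝ (Fin 3) => ((x 0, (x 1, x 2)) : ℝ × ℝ × ℝ)) ⁻¹' S0 := by
    rw [hS0def, hLdef]
    ext x
    simp only [mem_setOf_eq, mem_preimage]
    constructor
    · rintro ⟨hb, hl⟩
      exact ⟨hb 0, hb 1, hb 2, hl⟩
    · rintro ⟨hb0, hb1, hb2, hl⟩
      refine ⟨fun i => ?_, hl⟩
      fin_cases i
      · exact hb0
      · exact hb1
      · exact hb2
  rw [hSeq, hG.measure_preimage hS0m.nullMeasurableSet, hS0vol]
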